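/- Over F_q, there exists a family R ⊆ S_n such that any two distinct elements of R have gcd of degree at most d (for 1 ≤ d < n/2), with |R| ≥ (Σ_{i=1}^{⌊n/2⌋} I_i) + (Σ_{i=n−d}^{n−1} I_i) + I_n, where I_k is the number of monic irreducible polynomials of degree k over F_q with nonzero constant term. -/

import Mathlib

open Polynomial IntermediateField
set_option linter.unusedSectionVars false
set_option linter.unusedVariables false
set_option maxHeartbeats 1000000

/-- `Icnt F k` is the number of monic irreducible polynomials of degree `k` over `F`
with nonzero constant term. -/
noncomputable def Icnt (F : Type*) [Field F] (k : ℕ) : ℕ :=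
  Set.ncard {f : F[X] | f.Monic ∧ Irreducible f ∧ f.natDegree = k ∧ f.eval 0 ≠ 0}

noncomputable section

namespace LBAux

variable (F : Type*) [Field F] [Fintype F] [DecidableEq F]

/-- Monic irreducible polynomials of degree `k` with nonzero constant term. -/
def PIrr (k : ℕ) : Set F[X] :=
  {f : F[X] | f.Monic ∧ Irreducible f ∧ f.natDegree = k ∧ f.eval 0 ≠ 0}

local notation "Kbar" => AlgebraicClosure F
local notation "q" => Fintype.card F

lemma hq2 : 2 ≤ q := Fintype.one_lt_card

lemma finite_deg_le (k : ℕ) : {f : F[X] | f.natDegree ≤ k}.Finite := by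
  have hinj : Set.InjOn (fun f : F[X] => fun j : Fin (k + 1) => f.coeff j)
      {f | f.natDegree ≤ k} := by
    intro f hf g hg h
    ext j
    by_cases hj : j ≤ k
    · exact congrFun h ⟨j, Nat.lt_succ_of_le hj⟩
    · rw [f.coeff_eq_zero_of_natDegree_lt, g.coeff_eq_zero_of_natDegree_lt]
      · exact lt_of_le_of_lt hg (Nat.lt_of_not_le hj)
      · exact lt_of_le_of_lt hf (Nat.lt_of_not_le hj)
  exact Set.Finite.of_finite_image (Set.toFinite _) hinj

lemma PIrr_finite (k : ℕ) : (PIrr F k).Finite :=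
  (finite_deg_le F k).subset (fun f hf => le_of_eq hf.2.2.1)

/-- The polynomial `X^(q^t) - X`. -/
def gp (t : ℕ) : F[X] := X ^ q ^ t - X

/-- Elements of the algebraic closure fixed by the `t`-th power of Frobenius. -/
def Aset (t : ℕ) : Set Kbar := (gp F t).rootSet Kbar

lemma gp_ne_zero {t : ℕ} (ht : t ≠ 0) : gp F t ≠ 0 :=
  FiniteField.X_pow_card_pow_sub_X_ne_zero F ht (hq2 F)

lemma gp_natDegree {t : ℕ} (ht : t ≠ 0) : (gp F t).natDegree = q ^ t :=
  FiniteField.X_pow_card_pow_sub_X_natDegree_eq F ht (hq2 F)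

lemma mem_Aset {t : ℕ} (ht : t ≠ 0) {x : Kbar} : x ∈ Aset F t ↔ x ^ q ^ t = x := by
  rw [Aset, mem_rootSet]
  simp only [gp, map_sub, map_pow, aeval_X, sub_eq_zero]
  exact ⟨fun h => h.2, fun h => ⟨gp_ne_zero F ht, h⟩⟩

lemma gp_sep {t : ℕ} (ht : t ≠ 0) : (gp F t).Separable := by
  have hder : derivative (gp F t) = -1 := by
    rw [gp, derivative_sub, derivative_X_pow, derivative_X]
    have h0 : ((q ^ t : ℕ) : F) = 0 := by
      rw [Nat.cast_pow, FiniteField.cast_card_eq_zero, zero_pow ht]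
    rw [h0, map_zero, zero_mul, zero_sub]
  rw [Polynomial.separable_def, hder]
  exact IsCoprime.neg_right isCoprime_one_right

lemma Aset_finite (t : ℕ) : (Aset F t).Finite := (gp F t).rootSet_finite Kbar

lemma Aset_ncard {t : ℕ} (ht : t ≠ 0) : (Aset F t).ncard = q ^ t := by
  have h := card_rootSet_eq_natDegree (gp_sep F ht)
    (IsAlgClosed.splits ((gp F t).map (algebraMap F Kbar)))
  rw [Aset, ← Nat.card_coe_set_eq, Nat.card_eq_fintype_card, h, gp_natDegree F ht]

lemma isIntegral (α : Kbar) : IsIntegral F α := by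
  haveI := AlgebraicClosure.isAlgebraic F
  exact (Algebra.IsAlgebraic.isAlgebraic α).isIntegral

lemma pow_card_of_minpoly (α : Kbar) : α ^ q ^ (minpoly F α).natDegree = α := by
  have hint : IsIntegral F α := isIntegral F α
  haveI := IntermediateField.adjoin.finiteDimensional hint
  haveI : Finite F⟮α⟯ := Module.finite_of_finite F
  haveI : Fintype F⟮α⟯ := Fintype.ofFinite _
  have hcard : Fintype.card F⟮α⟯ = q ^ (minpoly F α).natDegree := by
    rw [Module.card_eq_pow_finrank (K := F) (V := F⟮α⟯), IntermediateField.adjoin.finrank hint]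
  have hg : (IntermediateField.AdjoinSimple.gen F α) ^ q ^ (minpoly F α).natDegree
      = IntermediateField.AdjoinSimple.gen F α := by
    rw [← hcard]
    exact FiniteField.pow_card _
  have := congrArg (algebraMap F⟮α⟯ Kbar) hg
  rwa [map_pow, IntermediateField.AdjoinSimple.algebraMap_gen] at this

lemma mem_Aset_of_deg (α : Kbar) {t : ℕ} (hd : (minpoly F α).natDegree = t) (ht : t ≠ 0) :
    α ∈ Aset F t := by
  rw [mem_Aset F ht, ← hd]
  exact pow_card_of_minpoly F α

lemma minpoly_eq_of_root {P : F[X]} {i : ℕ} (hP : P ∈ PIrr F i) {α : Kbar}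
    (hα : α ∈ P.rootSet Kbar) : minpoly F α = P :=
  (minpoly.eq_of_irreducible_of_monic hP.2.1 ((mem_rootSet.1 hα).2) hP.1).symm

lemma rootSet_subset_Aset {P : F[X]} {i : ℕ} (hi : i ≠ 0) (hP : P ∈ PIrr F i) :
    P.rootSet Kbar ⊆ Aset F i := by
  intro α hα
  exact mem_Aset_of_deg F α (by rw [minpoly_eq_of_root F hP hα, hP.2.2.1]) hi

lemma rootSet_ncard {P : F[X]} {i : ℕ} (hP : P ∈ PIrr F i) :
    (P.rootSet Kbar).ncard = i := by
  have hsep : P.Separable := PerfectField.separable_of_irreducible hP.2.1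
  have h := card_rootSet_eq_natDegree hsep (IsAlgClosed.splits (P.map (algebraMap F Kbar)))
  rw [← Nat.card_coe_set_eq, Nat.card_eq_fintype_card, h, hP.2.2.1]

lemma rootSet_disjoint {P Q : F[X]} {i j : ℕ} (hP : P ∈ PIrr F i) (hQ : Q ∈ PIrr F j)
    (hne : P ≠ Q) : Disjoint (P.rootSet Kbar) (Q.rootSet Kbar) := by
  rw [Set.disjoint_left]
  intro α hαP hαQ
  exact hne ((minpoly_eq_of_root F hP hαP).symm.trans (minpoly_eq_of_root F hQ hαQ))

/-- Upper bound : `i * |PIrr i| ≤ q ^ i`. -/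
lemma upper (i : ℕ) (hi : i ≠ 0) : i * (PIrr F i).ncard ≤ q ^ i := by
  classical
  set Sf : Finset F[X] := (PIrr_finite F i).toFinset with hSf
  have hmem : ∀ P, P ∈ Sf ↔ P ∈ PIrr F i := fun P => Set.Finite.mem_toFinset _
  set U : Finset Kbar := Sf.biUnion (fun P => ((P.rootSet Kbar).toFinite).toFinset) with hU
  have hcard : U.card = Sf.card * i := by
    rw [hU, Finset.card_biUnion]
    · rw [Finset.sum_congr rfl (fun P hP => ?_), Finset.sum_const, smul_eq_mul]
      rw [← Set.ncard_eq_toFinset_card _ ((P.rootSet Kbar).toFinite)]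
      exact rootSet_ncard F ((hmem P).1 hP)
    · intro P hP Q hQ hne
      rw [Function.onFun, Set.Finite.disjoint_toFinset]
      exact rootSet_disjoint F ((hmem P).1 hP) ((hmem Q).1 hQ) hne
  have hsub : U ⊆ (Aset_finite F i).toFinset := by
    intro x hx
    rw [Set.Finite.mem_toFinset]
    rcases Finset.mem_biUnion.1 hx with ⟨P, hP, hxP⟩
    exact rootSet_subset_Aset F hi ((hmem P).1 hP) ((Set.Finite.mem_toFinset _).1 hxP)
  have := Finset.card_le_card hsub
  rw [hcard] at this
  rw [← Set.ncard_eq_toFinset_card _ (Aset_finite F i), Aset_ncard F hi] at this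
  calc i * (PIrr F i).ncard = Sf.card * i := by
        rw [Set.ncard_eq_toFinset_card _ (PIrr_finite F i), mul_comm]
      _ ≤ q ^ i := this

lemma irr_eval_ne {f : F[X]} (hf : Irreducible f) (h2 : 2 ≤ f.natDegree) : f.eval 0 ≠ 0 := by
  intro h0
  have hX : (X : F[X]) ∣ f := Polynomial.X_dvd_iff.2 (by rw [coeff_zero_eq_eval_zero]; exact h0)
  obtain ⟨u, rfl⟩ := hX
  rcases hf.isUnit_or_isUnit rfl with h | h
  · exact Polynomial.not_isUnit_X h
  · obtain ⟨c, hc, hCp⟩ := Polynomial.isUnit_iff.1 h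
    rw [← hCp, natDegree_mul (X_ne_zero) (by simpa using hc.ne_zero), natDegree_X,
      natDegree_C] at h2
    omega

lemma ncard_biUnion_le {β γ : Type*} (s : Finset β) (f : β → Set γ)
    (hf : ∀ t, (f t).Finite) : (⋃ t ∈ s, f t).ncard ≤ ∑ t ∈ s, (f t).ncard := by
  classical
  induction s using Finset.induction_on with
  | empty => simp
  | insert a s' hx ih =>
    rw [Finset.set_biUnion_insert, Finset.sum_insert hx]
    have h1 := Set.ncard_union_le (f a) (⋃ t ∈ s', f t)
    omega

lemma exists_charstuff : ∃ p s : ℕ, p.Prime ∧ 0 < s ∧ q = p ^ s ∧ CharP F p := by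
  obtain ⟨p, hc⟩ := CharP.exists F
  haveI := hc
  obtain ⟨n, hn, hcard⟩ := FiniteField.card F p
  exact ⟨p, n, hn, n.2, hcard, hc⟩

set_option maxHeartbeats 1000000 in
set_option synthInstance.maxHeartbeats 400000 in
/-- Lower bound : `q^m ≤ m * |PIrr m| + ∑_{t ≤ m/2} q^t`. -/
lemma lower (m : ℕ) (hm : 2 ≤ m) :
    q ^ m ≤ m * (PIrr F m).ncard + ∑ t ∈ Finset.Icc 1 (m / 2), q ^ t := by
  classical
  obtain ⟨p, s, hp, hs0, hcardF, hchar⟩ := exists_charstuff F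
  haveI := hchar
  haveI : Fact p.Prime := ⟨hp⟩
  haveI : CharP Kbar p := charP_of_injective_algebraMap (algebraMap F Kbar).injective p
  set ψ : Kbar →+* Kbar := iterateFrobenius Kbar p (s * m) with hψdef
  have hψ : ∀ x : Kbar, ψ x = x ^ q ^ m := by
    intro x
    rw [hψdef, iterateFrobenius_def, hcardF, ← pow_mul]
  set E : Subfield Kbar :=
    { carrier := {x : Kbar | x ^ q ^ m = x}
      mul_mem' := fun {a b} ha hb => by
        simp only [Set.mem_setOf_eq] at *
        rw [mul_pow, ha, hb]
      one_mem' := one_pow _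
      add_mem' := fun {a b} ha hb => by
        simp only [Set.mem_setOf_eq, ← hψ] at *
        rw [map_add, ha, hb]
      zero_mem' := zero_pow (pow_ne_zero m Fintype.card_ne_zero)
      neg_mem' := fun {a} ha => by
        simp only [Set.mem_setOf_eq, ← hψ] at *
        rw [map_neg, ha]
      inv_mem' := fun a ha => by
        simp only [Set.mem_setOf_eq] at *
        rw [inv_pow, ha] } with hEdef
  set E' : IntermediateField F Kbar := E.toIntermediateField
    (fun c => by
      show (algebraMap F Kbar c) ^ q ^ m = algebraMap F Kbar c
      rw [← map_pow, FiniteField.pow_card_pow]) with hE'def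
  have hmemE' : ∀ x : Kbar, x ∈ E' ↔ x ^ q ^ m = x := fun x => Iff.rfl
  have hseteq : {x : Kbar | x ^ q ^ m = x} = Aset F m := by
    ext x
    rw [mem_Aset F (by omega : m ≠ 0)]
    rfl
  have hfinset : ({x : Kbar | x ^ q ^ m = x}).Finite := hseteq ▸ Aset_finite F m
  haveI : Finite ↥E' := hfinset.to_subtype
  haveI : FiniteDimensional F ↥E' := Module.Finite.of_finite
  haveI : Fintype ↥E' := Fintype.ofFinite _
  have hcardE : Fintype.card ↥E' = q ^ m := by
    have e : ↥E' ≃ ↥(Aset F m) := Equiv.setCongr hseteq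
    rw [← Nat.card_eq_fintype_card, Nat.card_congr e, Nat.card_coe_set_eq,
      Aset_ncard F (by omega : m ≠ 0)]
  clear_value E' ψ
  clear hψdef hE'def hψ hfinset hseteq hEdef E
  have hfr : Module.finrank F ↥E' = m := by
    have h := Module.card_eq_pow_finrank (K := F) (V := ↥E')
    rw [hcardE] at h
    exact Nat.pow_right_injective (hq2 F) h.symm
  have hdvd : ∀ α : Kbar, α ∈ E' → (minpoly F α).natDegree ∣ m := by
    intro α hα
    set β : ↥E' := ⟨α, hα⟩ with hβdef
    have hβ : algebraMap ↥E' Kbar β = α := rfl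
    have hmp : minpoly F α = minpoly F β := by
      rw [← hβ, minpoly.algebraMap_eq (algebraMap ↥E' Kbar).injective]
    have hintβ : IsIntegral F β := IsIntegral.of_finite F β
    haveI := IntermediateField.adjoin.finiteDimensional hintβ
    have h1 : Module.finrank F ↥F⟮β⟯ = (minpoly F β).natDegree :=
      IntermediateField.adjoin.finrank hintβ
    have h2 := Module.finrank_mul_finrank F ↥F⟮β⟯ ↥E'
    rw [hfr, h1] at h2
    rw [hmp]
    exact Dvd.intro _ h2
  -- the set of elements of degree exactly m
  set D : Set Kbar := Aset F m \ ⋃ t ∈ Finset.Icc 1 (m / 2), Aset F t with hDdef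
  have hDfin : D.Finite := (Aset_finite F m).subset Set.diff_subset
  have hDdeg : ∀ α ∈ D, (minpoly F α).natDegree = m := by
    rintro α ⟨hm', hnot⟩
    have hαE : α ∈ E' := by
      rw [hmemE' α, ← mem_Aset F (by omega : m ≠ 0)]
      exact hm'
    have hd := hdvd α hαE
    have hpos : 0 < (minpoly F α).natDegree := minpoly.natDegree_pos (isIntegral F α)
    by_contra hne
    have hle : (minpoly F α).natDegree ≤ m / 2 := by
      obtain ⟨c, hc⟩ := hd
      have hc2 : 2 ≤ c := by
        rcases Nat.lt_or_ge c 2 with h | h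
        · interval_cases c <;> omega
        · exact h
      have : (minpoly F α).natDegree * 2 ≤ m := by nlinarith
      omega
    exact hnot (Set.mem_biUnion (Finset.mem_Icc.2 ⟨hpos, hle⟩)
      (mem_Aset_of_deg F α rfl (by omega)))
  -- counting
  have step1 : q ^ m ≤ D.ncard + ∑ t ∈ Finset.Icc 1 (m / 2), q ^ t := by
    have hsub : Aset F m ⊆ D ∪ ⋃ t ∈ Finset.Icc 1 (m / 2), Aset F t := by
      intro x hx
      by_cases h : x ∈ ⋃ t ∈ Finset.Icc 1 (m / 2), Aset F t
      · exact Or.inr h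
      · exact Or.inl ⟨hx, h⟩
    have hUfin : (⋃ t ∈ Finset.Icc 1 (m / 2), Aset F t).Finite :=
      Set.Finite.biUnion ((Finset.Icc 1 (m / 2)).finite_toSet) (fun t _ => Aset_finite F t)
    have h1 := Set.ncard_le_ncard hsub (hDfin.union hUfin)
    have h2 := Set.ncard_union_le D (⋃ t ∈ Finset.Icc 1 (m / 2), Aset F t)
    have h3 : (⋃ t ∈ Finset.Icc 1 (m / 2), Aset F t).ncard
        ≤ ∑ t ∈ Finset.Icc 1 (m / 2), (Aset F t).ncard :=
      ncard_biUnion_le _ _ (fun t => Aset_finite F t)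
    have h4 : ∑ t ∈ Finset.Icc 1 (m / 2), (Aset F t).ncard
        = ∑ t ∈ Finset.Icc 1 (m / 2), q ^ t := by
      apply Finset.sum_congr rfl
      intro t ht
      exact Aset_ncard F (by rcases Finset.mem_Icc.1 ht with ⟨h1, _⟩; omega)
    rw [Aset_ncard F (by omega : m ≠ 0)] at h1
    omega
  have step2 : D.ncard ≤ m * (PIrr F m).ncard := by
    classical
    have hmaps : ∀ α ∈ hDfin.toFinset, minpoly F α ∈ (PIrr_finite F m).toFinset := by
      intro α hα
      rw [Set.Finite.mem_toFinset] at *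
      have hint := isIntegral F α
      exact ⟨minpoly.monic hint, minpoly.irreducible hint, hDdeg α hα,
        irr_eval_ne F (minpoly.irreducible hint) (by rw [hDdeg α hα]; omega)⟩
    have hfibers : ∀ b ∈ (PIrr_finite F m).toFinset,
        (hDfin.toFinset.filter (fun a => minpoly F a = b)).card ≤ m := by
      intro b hb
      rw [Set.Finite.mem_toFinset] at hb
      have hsubfib : (hDfin.toFinset.filter (fun a => minpoly F a = b))
          ⊆ ((b.rootSet Kbar).toFinite).toFinset := by
        intro x hx
        rcases Finset.mem_filter.1 hx with ⟨hxD, hxb⟩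
        rw [Set.Finite.mem_toFinset]
        rw [mem_rootSet]
        refine ⟨hb.1.ne_zero, ?_⟩
        rw [← hxb]
        exact minpoly.aeval F x
      have := Finset.card_le_card hsubfib
      rwa [← Set.ncard_eq_toFinset_card _ ((b.rootSet Kbar).toFinite),
        rootSet_ncard F hb] at this
    have hkey := Finset.card_le_mul_card_image_of_maps_to hmaps m hfibers
    rw [← Set.ncard_eq_toFinset_card _ hDfin, ← Set.ncard_eq_toFinset_card _ (PIrr_finite F m)]
      at hkey
    exact hkey
  omega

lemma pow_mono_aux {Q a b : ℕ} (hq : 2 ≤ Q) (ha : 1 ≤ a) (hab : a ≤ b) :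
    b * Q ^ a ≤ a * Q ^ b := by
  induction b, hab using Nat.le_induction with
  | base => exact le_rfl
  | succ b hab ih =>
    have h1 : Q ^ a ≤ Q ^ b := Nat.pow_le_pow_right (by omega) hab
    have h2 : Q ^ (b + 1) = Q ^ b * Q := pow_succ Q b
    have h3 : Q ^ b * 2 ≤ Q ^ b * Q := mul_le_mul_right hq _
    have h4 : a * (Q ^ b * 2) ≤ a * (Q ^ b * Q) := mul_le_mul_right h3 a
    have h5 : 1 * Q ^ b ≤ a * Q ^ b := mul_le_mul_left ha _
    nlinarith [ih, h1, h4, h5]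

lemma geom_aux {Q : ℕ} (hq : 2 ≤ Q) : ∀ k, (∑ t ∈ Finset.Icc 1 k, Q ^ t) + 2 ≤ 2 * Q ^ k := by
  intro k
  induction k with
  | zero => simp
  | succ k ih =>
    rw [Finset.sum_Icc_succ_top (by omega : 1 ≤ k + 1)]
    have h2 : Q ^ (k + 1) = Q ^ k * Q := pow_succ Q k
    have h3 : Q ^ k * 2 ≤ Q ^ k * Q := mul_le_mul_right hq _
    omega

lemma arith_key (Q i m : ℕ) (hq : 2 ≤ Q) (hi : 2 ≤ i) (him : i < m) :
    m * Q ^ i + i * (∑ t ∈ Finset.Icc 1 (m / 2), Q ^ t) ≤ i * Q ^ m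
      ∨ (Q = 2 ∧ m = 4 ∧ i = 3) := by
  set S := ∑ t ∈ Finset.Icc 1 (m / 2), Q ^ t with hSdef
  have hS : S + 2 ≤ 2 * Q ^ (m / 2) := geom_aux hq (m / 2)
  rcases Nat.lt_or_ge m 4 with hm4 | hm4
  · -- m = 3, i = 2
    left
    have hm3 : m = 3 := by omega
    have hi2 : i = 2 := by omega
    subst hm3; subst hi2
    have hSval : S = Q := by
      rw [hSdef]
      norm_num
    have b1 : Q ^ 3 = Q ^ 2 * Q := by ring
    have b2 : Q ^ 2 = Q * Q := by ring
    nlinarith [hq]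
  · rcases Nat.lt_or_ge i (m - 1) with hile | hieq
    · -- i ≤ m - 2
      left
      obtain ⟨c, hc⟩ : ∃ c, m = i + c + 2 := ⟨m - i - 2, by omega⟩
      subst hc
      set b2 := i + c with hb2
      set x := Q ^ i with hx
      set T := Q ^ b2 with hT
      set A := Q ^ ((b2 + 2) / 2) with hA
      have hA1 : b2 * x ≤ i * T := pow_mono_aux hq (by omega) (by omega)
      have hB : x ≤ T := Nat.pow_le_pow_right (by omega) (by omega)
      have hC : A ≤ T := Nat.pow_le_pow_right (by omega) (by omega)
      have hqm : Q ^ (b2 + 2) = T * Q ^ 2 := by rw [hT, ← pow_add]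
      have hE : 4 ≤ Q ^ 2 := by nlinarith [hq]
      have a1 : i * (S + 2) ≤ i * (2 * A) := mul_le_mul_right hS i
      have a2 : i * A ≤ i * T := mul_le_mul_right hC i
      have a3 : i * T * 4 ≤ i * T * Q ^ 2 := mul_le_mul_right hE (i * T)
      rw [hqm]
      nlinarith [hA1, hB, a1, a2, a3, hi]
    · -- i = m - 1
      have him1 : m = i + 1 := by omega
      rcases Nat.lt_or_ge m 5 with hm5 | hm5
      · -- m = 4, i = 3
        have hm4' : m = 4 := by omega
        have hi3 : i = 3 := by omega
        rcases Nat.lt_or_ge Q 3 with hq2' | hq3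
        · right; exact ⟨by omega, hm4', hi3⟩
        · left
          subst hm4'; subst hi3
          have hSk : S + 2 ≤ 2 * Q ^ 2 := hS
          have c1 : Q ^ 4 = Q ^ 3 * Q := by ring
          have c2 : Q ^ 3 = Q ^ 2 * Q := by ring
          have d1 : Q ^ 3 * 3 ≤ Q ^ 3 * Q := mul_le_mul_right hq3 _
          have d2 : Q ^ 2 * 3 ≤ Q ^ 2 * Q := mul_le_mul_right hq3 _
          nlinarith [hSk, d1, d2]
      · -- m ≥ 5
        left
        obtain ⟨ii, hii⟩ : ∃ ii, i = ii + 1 := ⟨i - 1, by omega⟩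
        have hii3 : 3 ≤ ii := by omega
        subst him1; subst hii
        set k := (ii + 1 + 1) / 2 with hk
        obtain ⟨k', hk'eq, hk'2⟩ : ∃ k', ii + 1 = k + k' ∧ 2 ≤ k' := ⟨ii + 1 - k, by omega, by omega⟩
        set x := Q ^ (ii + 1) with hxd
        set A := Q ^ k with hAd
        have hx4 : 4 * A ≤ x := by
          have : x = A * Q ^ k' := by rw [hxd, hAd, ← pow_add, ← hk'eq]
          have h4 : 4 ≤ Q ^ k' := by
            calc (4 : ℕ) = 2 ^ 2 := by norm_num
            _ ≤ Q ^ 2 := Nat.pow_le_pow_left hq 2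
            _ ≤ Q ^ k' := Nat.pow_le_pow_right (by omega) hk'2
          calc 4 * A ≤ Q ^ k' * A := by exact mul_le_mul_left h4 A
          _ = x := by rw [this, mul_comm]
        have heq : Q ^ (ii + 1 + 1) = x * Q := by rw [hxd, ← pow_succ]
        have a1 : (ii + 1) * (S + 2) ≤ (ii + 1) * (2 * A) := mul_le_mul_right hS _
        have a2 : ii * (4 * A) ≤ ii * x := mul_le_mul_right hx4 ii
        have a3 : ((ii + 1) * x) * 2 ≤ ((ii + 1) * x) * Q := mul_le_mul_right hq _
        rw [heq]
        nlinarith [a1, a2, a3, hx4, hii3]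

lemma PIrr_mono (i m : ℕ) (hi : 2 ≤ i) (him : i < m) :
    (PIrr F i).ncard ≤ (PIrr F m).ncard := by
  have hu := upper F i (by omega)
  have hl := lower F m (by omega)
  rcases arith_key q i m (hq2 F) hi him with hkey | ⟨hq, hm, hi3⟩
  · set S := ∑ t ∈ Finset.Icc 1 (m / 2), q ^ t with hSdef
    have h1 : i * (q ^ m) ≤ i * (m * (PIrr F m).ncard + S) := mul_le_mul_right hl i
    have h2 : m * (i * (PIrr F i).ncard) ≤ m * q ^ i := mul_le_mul_right hu m
    have hc : (m * i) * (PIrr F i).ncard ≤ (m * i) * (PIrr F m).ncard := by nlinarith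
    exact Nat.le_of_mul_le_mul_left hc (Nat.mul_pos (by omega) (by omega))
  · subst hm; subst hi3
    rw [hq] at hu hl
    have hIcc : Finset.Icc 1 (4 / 2) = {1, 2} := by decide
    rw [hIcc] at hl
    rw [Finset.sum_pair (by omega)] at hl
    norm_num at hu hl
    omega

variable {F}

lemma coprime_of_ne {p r : F[X]} (hpm : p.Monic) (hpi : Irreducible p)
    (hrm : r.Monic) (hri : Irreducible r) (hne : p ≠ r) : IsCoprime p r :=
  hpi.coprime_iff_not_dvd.2
    (fun h => hne (Polynomial.eq_of_monic_of_associated hpm hrm (hpi.associated_of_dvd hri h)))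

lemma ne_of_deg {p r : F[X]} (h : p.natDegree ≠ r.natDegree) : p ≠ r :=
  fun h' => h (by rw [h'])

lemma gcd_deg_le_right {f g c ℓ : F[X]} {e D : ℕ} (hl1 : ℓ.natDegree = 1) (hl0 : ℓ ≠ 0)
    (hg : g = c * ℓ ^ e) (he : e ≤ D) (hco : IsCoprime f c) :
    (EuclideanDomain.gcd f g).natDegree ≤ D := by
  have h2 : EuclideanDomain.gcd f g ∣ f := EuclideanDomain.gcd_dvd_left f g
  have h1 : EuclideanDomain.gcd f g ∣ g := EuclideanDomain.gcd_dvd_right f g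
  have hcg : IsCoprime (EuclideanDomain.gcd f g) c := hco.of_isCoprime_of_dvd_left h2
  have h1' : EuclideanDomain.gcd f g ∣ c * ℓ ^ e := by rw [← hg]; exact h1
  have h3 : EuclideanDomain.gcd f g ∣ ℓ ^ e := hcg.dvd_of_dvd_mul_left h1'
  have h4 : (ℓ ^ e) ≠ 0 := pow_ne_zero _ hl0
  have h5 := Polynomial.natDegree_le_of_dvd h3 h4
  rw [Polynomial.natDegree_pow, hl1, mul_one] at h5
  omega

lemma gcd_deg_le_left {f g c ℓ : F[X]} {e D : ℕ} (hl1 : ℓ.natDegree = 1) (hl0 : ℓ ≠ 0)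
    (hf : f = c * ℓ ^ e) (he : e ≤ D) (hco : IsCoprime g c) :
    (EuclideanDomain.gcd f g).natDegree ≤ D := by
  have h2 : EuclideanDomain.gcd f g ∣ g := EuclideanDomain.gcd_dvd_right f g
  have h1 : EuclideanDomain.gcd f g ∣ f := EuclideanDomain.gcd_dvd_left f g
  have hcg : IsCoprime (EuclideanDomain.gcd f g) c := hco.of_isCoprime_of_dvd_left h2
  have h1' : EuclideanDomain.gcd f g ∣ c * ℓ ^ e := by rw [← hf]; exact h1
  have h3 : EuclideanDomain.gcd f g ∣ ℓ ^ e := hcg.dvd_of_dvd_mul_left h1'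
  have h4 : (ℓ ^ e) ≠ 0 := pow_ne_zero _ hl0
  have h5 := Polynomial.natDegree_le_of_dvd h3 h4
  rw [Polynomial.natDegree_pow, hl1, mul_one] at h5
  omega

variable (F)

lemma PIrrS_finite (s : Finset ℕ) :
    {f : F[X] | f.Monic ∧ Irreducible f ∧ f.eval 0 ≠ 0 ∧ f.natDegree ∈ s}.Finite := by
  have hsub : {f : F[X] | f.Monic ∧ Irreducible f ∧ f.eval 0 ≠ 0 ∧ f.natDegree ∈ s}
      ⊆ ⋃ k ∈ s, PIrr F k :=
    fun f hf => Set.mem_biUnion hf.2.2.2 ⟨hf.1, hf.2.1, rfl, hf.2.2.1⟩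
  exact (Set.Finite.biUnion s.finite_toSet (fun k _ => PIrr_finite F k)).subset hsub

lemma sum_Icnt (s : Finset ℕ) :
    ∑ k ∈ s, (PIrr F k).ncard
      = {f : F[X] | f.Monic ∧ Irreducible f ∧ f.eval 0 ≠ 0 ∧ f.natDegree ∈ s}.ncard := by
  classical
  induction s using Finset.induction_on with
  | empty => simp
  | insert a s' hx ih =>
    rw [Finset.sum_insert hx, ih]
    have hsplit : {f : F[X] | f.Monic ∧ Irreducible f ∧ f.eval 0 ≠ 0 ∧ f.natDegree ∈ insert a s'}
        = (PIrr F a) ∪ {f : F[X] | f.Monic ∧ Irreducible f ∧ f.eval 0 ≠ 0 ∧ f.natDegree ∈ s'} := by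
      ext f
      simp only [PIrr, Set.mem_setOf_eq, Set.mem_union, Finset.mem_insert]
      tauto
    rw [hsplit, Set.ncard_union_eq ?_ (PIrr_finite F a) (PIrrS_finite F s')]
    rw [Set.disjoint_left]
    rintro f ⟨_, _, hfa, _⟩ ⟨_, _, _, hfs⟩
    exact hx (hfa ▸ hfs)

lemma exists_qsel (i m : ℕ) (hi : 2 ≤ i) (him : i < m) :
    ∃ φ : F[X] → F[X], Set.InjOn φ (PIrr F i) ∧ Set.MapsTo φ (PIrr F i) (PIrr F m) := by
  have hle : (PIrr F i).encard ≤ (PIrr F m).encard := by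
    rw [Set.Finite.encard_eq_coe_toFinset_card (PIrr_finite F i),
      Set.Finite.encard_eq_coe_toFinset_card (PIrr_finite F m)]
    have := PIrr_mono F i m hi him
    rw [Set.ncard_eq_toFinset_card _ (PIrr_finite F i),
      Set.ncard_eq_toFinset_card _ (PIrr_finite F m)] at this
    exact_mod_cast this
  obtain ⟨φ, hsub, hinj⟩ := Set.Finite.exists_injOn_of_encard_le (PIrr_finite F i) hle
  exact ⟨φ, hinj, fun x hx => hsub hx⟩

/-- The map sending an irreducible to its associated degree-`n` polynomial. -/
def Phi (n d : ℕ) (ℓ : F[X]) (φ : ℕ → F[X] → F[X]) (P : F[X]) : F[X] :=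
  if P.natDegree = n then P
  else if n - d ≤ P.natDegree then P * ℓ ^ (n - P.natDegree)
  else if P.natDegree ≤ d then P ^ (n / P.natDegree) * ℓ ^ (n % P.natDegree)
  else if 2 * P.natDegree = n then P ^ 2
  else P * φ P.natDegree P

end LBAux

open LBAux

/-- Lower bound: over a finite field, for `1 ≤ d < n/2`, there is a family `R ⊆ S_n` with
pairwise gcd of degree at most `d` and cardinality at least
`(Σ_{i=1}^{⌊n/2⌋} I_i) + (Σ_{i=n-d}^{n-1} I_i) + I_n`. -/
theorem lower_bound (F : Type*) [Field F] [Fintype F] [DecidableEq F] (n d : ℕ) (hd1 : 1 ≤ d)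
    (hd2 : 2 * d < n) :
    ∃ R : Set F[X],
      (∀ f ∈ R, f.Monic ∧ f.natDegree = n ∧ f.eval 0 ≠ 0) ∧
      (∀ f ∈ R, ∀ g ∈ R, f ≠ g → (EuclideanDomain.gcd f g).natDegree ≤ d) ∧
      (∑ i ∈ Finset.Icc 1 (n / 2), Icnt F i) +
        (∑ i ∈ Finset.Icc (n - d) (n - 1), Icnt F i) + Icnt F n ≤ R.ncard := by
  classical
  have hn3 : 3 ≤ n := by omega
  set ℓ : F[X] := X - C 1 with hldef
  have hlm : ℓ.Monic := monic_X_sub_C 1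
  have hli : Irreducible ℓ := irreducible_X_sub_C 1
  have hldeg : ℓ.natDegree = 1 := by rw [hldef, natDegree_X_sub_C]
  have hl0 : ℓ ≠ 0 := hlm.ne_zero
  have hle0 : ℓ.eval 0 ≠ 0 := by
    rw [hldef]
    simp only [eval_sub, eval_X, eval_C, zero_sub, ne_eq, neg_eq_zero]
    exact one_ne_zero
  -- selection of injections for the middle range
  have hsel : ∀ i : ℕ, ∃ ψ : F[X] → F[X],
      (2 ≤ i ∧ 2 * i < n) →
        Set.InjOn ψ (PIrr F i) ∧ Set.MapsTo ψ (PIrr F i) (PIrr F (n - i)) := by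
    intro i
    by_cases h : 2 ≤ i ∧ 2 * i < n
    · obtain ⟨ψ, h1, h2⟩ := exists_qsel F i (n - i) h.1 (by omega)
      exact ⟨ψ, fun _ => ⟨h1, h2⟩⟩
    · exact ⟨id, fun hc => absurd hc h⟩
  choose φ hφ using hsel
  set Φ := Phi (F := F) n d ℓ φ with hΦdef
  set sAll : Finset ℕ := (Finset.Icc 1 (n / 2) ∪ Finset.Icc (n - d) (n - 1)) ∪ {n} with hsAlldef
  set J : Set F[X] := {f : F[X] | f.Monic ∧ Irreducible f ∧ f.eval 0 ≠ 0 ∧ f.natDegree ∈ sAll}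
    with hJdef
  have hrange : ∀ P ∈ J,
      (1 ≤ P.natDegree ∧ P.natDegree ≤ n / 2) ∨
      (n - d ≤ P.natDegree ∧ P.natDegree ≤ n - 1) ∨ P.natDegree = n := by
    rintro P ⟨-, -, -, hdeg⟩
    rw [hsAlldef, Finset.mem_union, Finset.mem_union, Finset.mem_Icc, Finset.mem_Icc,
      Finset.mem_singleton] at hdeg
    tauto
  have hcases : ∀ P ∈ J,
      ((Φ P).Monic ∧ (Φ P).natDegree = n ∧ (Φ P).eval 0 ≠ 0) ∧
      ((P = ℓ ∧ Φ P = ℓ ^ n) ∨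
       (∃ a e, 1 ≤ a ∧ e ≤ d ∧ P ≠ ℓ ∧ Φ P = P ^ a * ℓ ^ e) ∨
       (∃ V, V ∈ PIrr F (n - P.natDegree) ∧ Φ P = P * V ∧
          d < P.natDegree ∧ 2 * P.natDegree < n ∧ V = φ P.natDegree P)) := by
    intro P hPJ
    have hr := hrange P hPJ
    obtain ⟨hPm, hPi, hP0, hPdeg⟩ := hPJ
    have hΦP : Φ P = if P.natDegree = n then P
        else if n - d ≤ P.natDegree then P * ℓ ^ (n - P.natDegree)
        else if P.natDegree ≤ d then P ^ (n / P.natDegree) * ℓ ^ (n % P.natDegree)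
        else if 2 * P.natDegree = n then P ^ 2
        else P * φ P.natDegree P := rfl
    rcases hr with ⟨hr1, hr2⟩ | ⟨hr1, hr2⟩ | hr1
    · -- small degrees 1 ≤ i ≤ n/2
      have hne_n : ¬ (P.natDegree = n) := by omega
      have hne_b : ¬ (n - d ≤ P.natDegree) := by omega
      rcases le_or_gt P.natDegree d with hsm | hbig
      · -- i ≤ d
        have hΦeq : Φ P = P ^ (n / P.natDegree) * ℓ ^ (n % P.natDegree) := by
          rw [hΦP, if_neg hne_n, if_neg hne_b, if_pos hsm]
        have hdiv : P.natDegree * (n / P.natDegree) + n % P.natDegree = n :=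
          Nat.div_add_mod n P.natDegree
        have hmod : n % P.natDegree < P.natDegree := Nat.mod_lt n (by omega)
        have ha1 : 1 ≤ n / P.natDegree := (Nat.one_le_div_iff (by omega)).2 (by omega)
        refine ⟨⟨?_, ?_, ?_⟩, ?_⟩
        · rw [hΦeq]; exact (hPm.pow _).mul (hlm.pow _)
        · rw [hΦeq, Polynomial.Monic.natDegree_mul (hPm.pow _) (hlm.pow _),
            Polynomial.natDegree_pow, Polynomial.natDegree_pow, hldeg, mul_one, mul_comm]
          exact hdiv
        · rw [hΦeq, eval_mul, eval_pow, eval_pow]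
          exact mul_ne_zero (pow_ne_zero _ hP0) (pow_ne_zero _ hle0)
        · by_cases hPl : P = ℓ
          · left
            refine ⟨hPl, ?_⟩
            rw [hΦeq, hPl, hldeg, Nat.div_one, Nat.mod_one, pow_zero, mul_one]
          · right; left
            exact ⟨_, _, ha1, by omega, hPl, hΦeq⟩
      · -- d < i ≤ n/2
        have hne_c : ¬ (P.natDegree ≤ d) := by omega
        by_cases h2i : 2 * P.natDegree = n
        · have hΦeq : Φ P = P ^ 2 := by
            rw [hΦP, if_neg hne_n, if_neg hne_b, if_neg hne_c, if_pos h2i]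
          refine ⟨⟨?_, ?_, ?_⟩, ?_⟩
          · rw [hΦeq]; exact hPm.pow _
          · rw [hΦeq, Polynomial.natDegree_pow]; omega
          · rw [hΦeq, eval_pow]; exact pow_ne_zero _ hP0
          · right; left
            refine ⟨2, 0, by omega, by omega, ne_of_deg (by rw [hldeg]; omega), ?_⟩
            rw [hΦeq, pow_zero, mul_one]
        · have h2lt : 2 * P.natDegree < n := by omega
          have hcond : 2 ≤ P.natDegree ∧ 2 * P.natDegree < n := ⟨by omega, h2lt⟩
          have hPmem : P ∈ PIrr F P.natDegree := ⟨hPm, hPi, rfl, hP0⟩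
          have hVmem : φ P.natDegree P ∈ PIrr F (n - P.natDegree) :=
            (hφ P.natDegree hcond).2 hPmem
          obtain ⟨hVm, hVi, hVdeg, hV0⟩ := hVmem
          have hΦeq : Φ P = P * φ P.natDegree P := by
            rw [hΦP, if_neg hne_n, if_neg hne_b, if_neg hne_c, if_neg h2i]
          refine ⟨⟨?_, ?_, ?_⟩, ?_⟩
          · rw [hΦeq]; exact hPm.mul hVm
          · rw [hΦeq, Polynomial.Monic.natDegree_mul hPm hVm, hVdeg]; omega
          · rw [hΦeq, eval_mul]; exact mul_ne_zero hP0 hV0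
          · right; right
            exact ⟨φ P.natDegree P, ⟨hVm, hVi, hVdeg, hV0⟩, hΦeq, by omega, h2lt, rfl⟩
    · -- n - d ≤ i ≤ n - 1
      have hne_n : ¬ (P.natDegree = n) := by omega
      have hΦeq : Φ P = P * ℓ ^ (n - P.natDegree) := by
        rw [hΦP, if_neg hne_n, if_pos hr1]
      refine ⟨⟨?_, ?_, ?_⟩, ?_⟩
      · rw [hΦeq]; exact hPm.mul (hlm.pow _)
      · rw [hΦeq, Polynomial.Monic.natDegree_mul hPm (hlm.pow _), Polynomial.natDegree_pow,
          hldeg]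
        omega
      · rw [hΦeq, eval_mul, eval_pow]; exact mul_ne_zero hP0 (pow_ne_zero _ hle0)
      · right; left
        exact ⟨1, n - P.natDegree, le_rfl, by omega, ne_of_deg (by rw [hldeg]; omega),
          by rw [hΦeq, pow_one]⟩
    · -- i = n
      have hΦeq : Φ P = P := by rw [hΦP, if_pos hr1]
      refine ⟨⟨by rw [hΦeq]; exact hPm, by rw [hΦeq]; exact hr1, by rw [hΦeq]; exact hP0⟩, ?_⟩
      right; left
      exact ⟨1, 0, le_rfl, by omega, ne_of_deg (by rw [hldeg]; omega),
        by rw [hΦeq, pow_one, pow_zero, mul_one]⟩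
  -- pairwise gcd bound
  have hmain : ∀ P ∈ J, ∀ P' ∈ J, P ≠ P' →
      (EuclideanDomain.gcd (Φ P) (Φ P')).natDegree ≤ d := by
    intro P hPJ P' hP'J hne
    have hrP := hrange P hPJ
    have hrP' := hrange P' hP'J
    obtain ⟨-, hcase⟩ := hcases P hPJ
    obtain ⟨-, hcase'⟩ := hcases P' hP'J
    obtain ⟨hPm, hPi, hP0, hPdeg⟩ := hPJ
    obtain ⟨hP'm, hP'i, hP'0, hP'deg⟩ := hP'J
    rcases hcase' with ⟨hP'l, hΦ'⟩ | ⟨a', e', ha', he', hP'nl, hΦ'⟩ |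
      ⟨V', hV'mem, hΦ', hd', h2', hV'def⟩
    · -- P' = ℓ
      rcases hcase with ⟨hPl, hΦ⟩ | ⟨a, e, ha, he, hPnl, hΦ⟩ | ⟨V, hVmem, hΦ, hdP, h2P, hVdef⟩
      · exact absurd (hPl.trans hP'l.symm) hne
      · apply gcd_deg_le_left hldeg hl0 hΦ he
        rw [hΦ']
        exact (coprime_of_ne hlm hli hPm hPi (fun h => hPnl h.symm)).pow
      · obtain ⟨hVm, hVi, hVdeg, hV0⟩ := hVmem
        apply gcd_deg_le_left (c := P * V) (e := 0) hldeg hl0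
          (by rw [hΦ, pow_zero, mul_one]) (by omega)
        rw [hΦ']
        refine IsCoprime.pow_left ?_
        refine (coprime_of_ne hlm hli hPm hPi ?_).mul_right
          (coprime_of_ne hlm hli hVm hVi ?_)
        · exact ne_of_deg (by rw [hldeg]; omega)
        · exact ne_of_deg (by rw [hldeg, hVdeg]; omega)
    · -- g = P'^a' * ℓ^e'
      apply gcd_deg_le_right hldeg hl0 hΦ' he'
      rcases hcase with ⟨hPl, hΦ⟩ | ⟨a, e, ha, he, hPnl, hΦ⟩ | ⟨V, hVmem, hΦ, hdP, h2P, hVdef⟩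
      · rw [hΦ]
        exact (coprime_of_ne hlm hli hP'm hP'i (fun h => hP'nl h.symm)).pow
      · rw [hΦ]
        have h1 : IsCoprime P P' := coprime_of_ne hPm hPi hP'm hP'i hne
        have h2 : IsCoprime ℓ P' := coprime_of_ne hlm hli hP'm hP'i (fun h => hP'nl h.symm)
        exact h1.pow.mul_left h2.pow
      · rw [hΦ]
        obtain ⟨hVm, hVi, hVdeg, hV0⟩ := hVmem
        have h1 : IsCoprime P P' := coprime_of_ne hPm hPi hP'm hP'i hne
        have h2 : IsCoprime V P' := by
          refine coprime_of_ne hVm hVi hP'm hP'i (ne_of_deg ?_)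
          rw [hVdeg]
          rcases hrP' with ⟨u1, u2⟩ | ⟨u1, u2⟩ | u1 <;> omega
        exact (h1.mul_left h2).pow_right
    · -- g = P' * V'
      obtain ⟨hV'm, hV'i, hV'deg, hV'0⟩ := hV'mem
      apply gcd_deg_le_right (c := P' * V') (e := 0) hldeg hl0
        (by rw [hΦ', pow_zero, mul_one]) (by omega)
      rcases hcase with ⟨hPl, hΦ⟩ | ⟨a, e, ha, he, hPnl, hΦ⟩ | ⟨V, hVmem, hΦ, hdP, h2P, hVdef⟩
      · rw [hΦ]
        refine IsCoprime.pow_left ?_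
        refine (coprime_of_ne hlm hli hP'm hP'i (ne_of_deg ?_)).mul_right
          (coprime_of_ne hlm hli hV'm hV'i (ne_of_deg ?_))
        · rw [hldeg]; omega
        · rw [hldeg, hV'deg]; omega
      · rw [hΦ]
        have h1 : IsCoprime P P' := coprime_of_ne hPm hPi hP'm hP'i hne
        have h2 : IsCoprime P V' := by
          refine coprime_of_ne hPm hPi hV'm hV'i (ne_of_deg ?_)
          rw [hV'deg]
          rcases hrP with ⟨u1, u2⟩ | ⟨u1, u2⟩ | u1 <;> omega
        have h3 : IsCoprime ℓ P' := coprime_of_ne hlm hli hP'm hP'i (ne_of_deg (by rw [hldeg]; omega))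
        have h4 : IsCoprime ℓ V' := coprime_of_ne hlm hli hV'm hV'i
          (ne_of_deg (by rw [hldeg, hV'deg]; omega))
        exact ((h1.mul_right h2).pow_left).mul_left ((h3.mul_right h4).pow_left)
      · rw [hΦ]
        obtain ⟨hVm, hVi, hVdeg, hV0⟩ := hVmem
        have h1 : IsCoprime P P' := coprime_of_ne hPm hPi hP'm hP'i hne
        have h2 : IsCoprime P V' := coprime_of_ne hPm hPi hV'm hV'i
          (ne_of_deg (by rw [hV'deg]; omega))
        have h3 : IsCoprime V P' := coprime_of_ne hVm hVi hP'm hP'i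
          (ne_of_deg (by rw [hVdeg]; omega))
        have h4 : IsCoprime V V' := by
          refine coprime_of_ne hVm hVi hV'm hV'i ?_
          by_cases hdeq : P.natDegree = P'.natDegree
          · rw [hVdef, hV'def, ← hdeq]
            intro hVV
            have hPmem : P ∈ PIrr F P.natDegree := ⟨hPm, hPi, rfl, hP0⟩
            have hP'mem : P' ∈ PIrr F P.natDegree := ⟨hP'm, hP'i, hdeq.symm, hP'0⟩
            exact hne ((hφ P.natDegree ⟨by omega, h2P⟩).1 hPmem hP'mem hVV)
          · exact ne_of_deg (by rw [hVdeg, hV'deg]; omega)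
        exact (h1.mul_right h2).mul_left (h3.mul_right h4)
  -- conclusion
  refine ⟨Φ '' J, ?_, ?_, ?_⟩
  · rintro f ⟨P, hPJ, rfl⟩
    exact (hcases P hPJ).1
  · rintro f ⟨P, hPJ, rfl⟩ g ⟨P', hP'J, rfl⟩ hfg
    exact hmain P hPJ P' hP'J (fun h => hfg (by rw [h]))
  · have hinj : Set.InjOn Φ J := by
      intro P hPJ P' hP'J heq
      by_contra hne
      have h := hmain P hPJ P' hP'J hne
      rw [heq, EuclideanDomain.gcd_self] at h
      obtain ⟨⟨-, hdeg, -⟩, -⟩ := hcases P' hP'J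
      omega
    have hcard : (Φ '' J).ncard = J.ncard := Set.ncard_image_of_injOn hinj
    have hd1 : Disjoint (Finset.Icc 1 (n / 2)) (Finset.Icc (n - d) (n - 1)) := by
      rw [Finset.disjoint_left]
      intro x hx1 hx2
      rw [Finset.mem_Icc] at hx1 hx2
      omega
    have hd2 : Disjoint (Finset.Icc 1 (n / 2) ∪ Finset.Icc (n - d) (n - 1)) ({n} : Finset ℕ) := by
      rw [Finset.disjoint_right]
      intro x hx1 hx2
      rw [Finset.mem_singleton] at hx1
      rw [Finset.mem_union, Finset.mem_Icc, Finset.mem_Icc] at hx2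
      omega
    have hkey : (∑ i ∈ Finset.Icc 1 (n / 2), Icnt F i) +
        (∑ i ∈ Finset.Icc (n - d) (n - 1), Icnt F i) + Icnt F n
        = (Φ '' J).ncard := by
      have hIcnt : ∀ k, Icnt F k = (PIrr F k).ncard := fun k => rfl
      rw [hcard]
      have hsum := sum_Icnt F sAll
      rw [hJdef, ← hsum, hsAlldef, Finset.sum_union hd2, Finset.sum_union hd1,
        Finset.sum_singleton]
      simp only [hIcnt]
    exact le_of_eq hkey
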